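/- Assume d1 ≥ d2, γ > 0, and G ∈ R^{d1×d2} has singular value decomposition G = U [Diag(σ); 0] Vᵀ with σ₁ ≥ … ≥ σ_{d2} ≥ 0. Then Prox_{γ‖·‖_*}(G) = U [Diag((σ − γ)_+); 0] Vᵀ, where (σ − γ)_+ applies t ↦ max(t − γ, 0) entrywise; i.e., singular value soft-thresholding minimizes X ↦ (1/2)‖X − G‖_F² + γ‖X‖_*. -/

import Mathlib

open scoped BigOperators
open Matrix

noncomputable def frobNorm {m k : Type*} [Fintype m] [Fintype k] (A : Matrix m k ℝ) : ℝ :=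
  Real.sqrt (∑ i, ∑ j, (A i j) ^ 2)

/-- The singular values of a real matrix, indexed by columns: square roots of the
eigenvalues of `Aᴴ * A`. -/
noncomputable def svals {m k : Type*} [Fintype m] [Fintype k] [DecidableEq k]
    (A : Matrix m k ℝ) : k → ℝ :=
  fun i => Real.sqrt ((Matrix.isHermitian_conjTranspose_mul_self A).eigenvalues i)

/-- The nuclear norm: sum of singular values. -/
noncomputable def nuclearNorm {m k : Type*} [Fintype m] [Fintype k] [DecidableEq k]
    (A : Matrix m k ℝ) : ℝ :=
  ∑ i, svals A i

/-- `P` is the proximal point of `X` under `γ‖·‖_*`: the minimizer of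
`U ↦ (1/2)‖U − X‖_F² + γ‖U‖_*`. -/
def IsProxNuc {d1 d2 : ℕ} (γ : ℝ) (X P : Matrix (Fin d1) (Fin d2) ℝ) : Prop :=
  ∀ U : Matrix (Fin d1) (Fin d2) ℝ,
    (1 / 2) * (frobNorm (P - X)) ^ 2 + γ * nuclearNorm P ≤
      (1 / 2) * (frobNorm (U - X)) ^ 2 + γ * nuclearNorm U


section Aux

open Finset

noncomputable def F2 {m k : Type*} [Fintype m] [Fintype k] (A : Matrix m k ℝ) : ℝ :=
  ∑ i, ∑ j, (A i j) ^ 2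

lemma F2_eq_zero {m k : Type*} [Fintype m] [Fintype k] (A : Matrix m k ℝ)
    (h : F2 A ≤ 0) : A = 0 := by
  ext i j
  have h1 : F2 A = 0 := le_antisymm h (Finset.sum_nonneg fun _ _ => Finset.sum_nonneg fun _ _ => sq_nonneg _)
  have h2 : ∀ i ∈ (Finset.univ : Finset m), ∑ j, (A i j)^2 = 0 :=
    (Finset.sum_eq_zero_iff_of_nonneg (fun (i : m) _ => Finset.sum_nonneg fun (j : k) _ => sq_nonneg (A i j))).1 h1
  have h3 := (Finset.sum_eq_zero_iff_of_nonneg (fun _ _ => sq_nonneg _)).1 (h2 i (mem_univ i)) j (mem_univ j)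
  simpa using pow_eq_zero_iff (n := 2) (by norm_num) |>.1 h3

lemma F2_eq_trace {m k : Type*} [Fintype m] [Fintype k] (A : Matrix m k ℝ) :
    F2 A = Matrix.trace (Aᵀ * A) := by
  rw [Matrix.trace]
  simp only [Matrix.diag, Matrix.mul_apply, Matrix.transpose_apply, F2, sq]
  rw [Finset.sum_comm]

lemma F2_conj {m k : Type*} [Fintype m] [Fintype k] [DecidableEq m] [DecidableEq k]
    (U : Matrix m m ℝ) (W : Matrix k k ℝ) (hU : Uᵀ * U = 1) (hW : W * Wᵀ = 1)
    (A : Matrix m k ℝ) : F2 (U * A * W) = F2 A := by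
  rw [F2_eq_trace, F2_eq_trace]
  have : (U * A * W)ᵀ * (U * A * W) = Wᵀ * (Aᵀ * A) * W := by
    simp only [Matrix.transpose_mul]
    calc Wᵀ * (Aᵀ * Uᵀ) * (U * A * W) = Wᵀ * Aᵀ * (Uᵀ * U) * A * W := by
          simp only [Matrix.mul_assoc]
      _ = Wᵀ * (Aᵀ * A) * W := by rw [hU]; simp only [Matrix.mul_one, Matrix.mul_assoc]
  rw [this, Matrix.trace_mul_cycle, ← Matrix.mul_assoc, hW, Matrix.one_mul]

lemma sum_mul_sqrt_le {ι : Type*} [Fintype ι] (w t : ι → ℝ) (hw : ∀ i, 0 ≤ w i)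
    (ht : ∀ i, 0 ≤ t i) (hw1 : ∑ i, w i = 1) :
    ∑ i, w i * Real.sqrt (t i) ≤ Real.sqrt (∑ i, w i * t i) := by
  have key : (∑ i, w i * Real.sqrt (t i)) ^ 2 ≤ ∑ i, w i * t i := by
    have h := Finset.sum_mul_sq_le_sq_mul_sq Finset.univ
      (fun i => Real.sqrt (w i)) (fun i => Real.sqrt (w i) * Real.sqrt (t i))
    have e1 : ∀ i : ι, Real.sqrt (w i) * (Real.sqrt (w i) * Real.sqrt (t i)) = w i * Real.sqrt (t i) := by
      intro i; rw [← mul_assoc, Real.mul_self_sqrt (hw i)]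
    have e2 : ∀ i : ι, Real.sqrt (w i) ^ 2 = w i := fun i => Real.sq_sqrt (hw i)
    have e3 : ∀ i : ι, (Real.sqrt (w i) * Real.sqrt (t i)) ^ 2 = w i * t i := by
      intro i; rw [mul_pow, Real.sq_sqrt (hw i), Real.sq_sqrt (ht i)]
    simp only [e1, e2, e3] at h
    simpa [hw1] using h
  have hnn : 0 ≤ ∑ i, w i * Real.sqrt (t i) :=
    Finset.sum_nonneg fun i _ => mul_nonneg (hw i) (Real.sqrt_nonneg _)
  calc ∑ i, w i * Real.sqrt (t i) = Real.sqrt ((∑ i, w i * Real.sqrt (t i))^2) := by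
        rw [Real.sqrt_sq hnn]
    _ ≤ Real.sqrt (∑ i, w i * t i) := Real.sqrt_le_sqrt key

lemma F2_nonneg {m k : Type*} [Fintype m] [Fintype k] (A : Matrix m k ℝ) : 0 ≤ F2 A :=
  Finset.sum_nonneg fun _ _ => Finset.sum_nonneg fun _ _ => sq_nonneg _

lemma frobNorm_sq {m k : Type*} [Fintype m] [Fintype k] (A : Matrix m k ℝ) :
    (frobNorm A) ^ 2 = F2 A :=
  Real.sq_sqrt (F2_nonneg A)

lemma sum_sqrt_eigenvalues {n : Type*} [Fintype n] [DecidableEq n]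
    {H : Matrix n n ℝ} (hH : H.IsHermitian) (Q : Matrix n n ℝ) (t : n → ℝ)
    (hQ₁ : Qᵀ * Q = 1) (hQ₂ : Q * Qᵀ = 1) (ht : ∀ i, 0 ≤ t i)
    (hHQ : H = Q * Matrix.diagonal t * Qᵀ) :
    ∑ i, Real.sqrt (hH.eigenvalues i) = ∑ k, Real.sqrt (t k) := by
  set Wm : Matrix n n ℝ := (hH.eigenvectorUnitary : Matrix n n ℝ) with hWm
  have hW1 : Wmᵀ * Wm = 1 := by
    have := Matrix.mem_unitaryGroup_iff'.mp hH.eigenvectorUnitary.2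
    rwa [Matrix.star_eq_conjTranspose, Matrix.conjTranspose_eq_transpose_of_trivial] at this
  have hW2 : Wm * Wmᵀ = 1 := by
    have := Matrix.mem_unitaryGroup_iff.mp hH.eigenvectorUnitary.2
    rwa [Matrix.star_eq_conjTranspose, Matrix.conjTranspose_eq_transpose_of_trivial] at this
  have hspec : Wmᵀ * H * Wm = Matrix.diagonal hH.eigenvalues := by
    have := hH.conjStarAlgAut_star_eigenvectorUnitary
    rw [Unitary.conjStarAlgAut_star_apply] at this
    rw [Matrix.star_eq_conjTranspose, Matrix.conjTranspose_eq_transpose_of_trivial] at this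
    rw [← hWm] at this
    rw [this]
    congr 1
  set M : Matrix n n ℝ := Wmᵀ * Q with hM
  have hMT : Mᵀ = Qᵀ * Wm := by rw [hM, Matrix.transpose_mul, Matrix.transpose_transpose]
  have hM1 : Mᵀ * M = 1 := by
    rw [hMT, hM]
    calc Qᵀ * Wm * (Wmᵀ * Q) = Qᵀ * (Wm * Wmᵀ) * Q := by simp only [Matrix.mul_assoc]
      _ = 1 := by rw [hW2, Matrix.mul_one, hQ₁]
  have hM2 : M * Mᵀ = 1 := by
    rw [hMT, hM]
    calc Wmᵀ * Q * (Qᵀ * Wm) = Wmᵀ * (Q * Qᵀ) * Wm := by simp only [Matrix.mul_assoc]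
      _ = 1 := by rw [hQ₂, Matrix.mul_one, hW1]
  have hdiag : Matrix.diagonal hH.eigenvalues = M * Matrix.diagonal t * Mᵀ := by
    rw [← hspec, hHQ, hM, hMT]; simp only [Matrix.mul_assoc]
  have hdiag2 : Matrix.diagonal t = Mᵀ * Matrix.diagonal hH.eigenvalues * M := by
    rw [hdiag]
    have : Mᵀ * (M * Matrix.diagonal t * Mᵀ) * M
        = (Mᵀ * M) * Matrix.diagonal t * (Mᵀ * M) := by simp only [Matrix.mul_assoc]
    rw [this, hM1, Matrix.one_mul, Matrix.mul_one]
  -- entrywise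
  have heig : ∀ i, hH.eigenvalues i = ∑ k, (M i k)^2 * t k := by
    intro i
    have := congrFun (congrFun hdiag i) i
    simpa [Matrix.mul_apply, Matrix.diagonal, sq, mul_comm, mul_assoc, mul_left_comm] using this
  have htk : ∀ k, t k = ∑ i, (M i k)^2 * hH.eigenvalues i := by
    intro k
    have := congrFun (congrFun hdiag2 k) k
    simpa [Matrix.mul_apply, Matrix.diagonal, sq, mul_comm, mul_assoc, mul_left_comm] using this
  have hrow : ∀ i, ∑ k, (M i k)^2 = 1 := by
    intro i
    have := congrFun (congrFun hM2 i) i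
    simpa [Matrix.mul_apply, Matrix.one_apply, sq] using this
  have hcol : ∀ k, ∑ i, (M i k)^2 = 1 := by
    intro k
    have := congrFun (congrFun hM1 k) k
    simpa [Matrix.mul_apply, Matrix.one_apply, sq, mul_comm] using this
  have heig_nn : ∀ i, 0 ≤ hH.eigenvalues i := by
    intro i; rw [heig i]
    exact Finset.sum_nonneg fun k _ => mul_nonneg (sq_nonneg _) (ht k)
  apply le_antisymm
  · have h1 : ∀ k, ∑ i, (M i k)^2 * Real.sqrt (hH.eigenvalues i) ≤ Real.sqrt (t k) := by
      intro k
      rw [htk k]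
      exact sum_mul_sqrt_le _ _ (fun i => sq_nonneg _) heig_nn (hcol k)
    calc ∑ i, Real.sqrt (hH.eigenvalues i)
        = ∑ i, (∑ k, (M i k)^2) * Real.sqrt (hH.eigenvalues i) := by
          simp only [hrow, one_mul]
      _ = ∑ i, ∑ k, (M i k)^2 * Real.sqrt (hH.eigenvalues i) := by
          simp only [Finset.sum_mul]
      _ = ∑ k, ∑ i, (M i k)^2 * Real.sqrt (hH.eigenvalues i) := by rw [Finset.sum_comm]
      _ ≤ ∑ k, Real.sqrt (t k) := Finset.sum_le_sum fun k _ => h1 k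
  · have h1 : ∀ i, ∑ k, (M i k)^2 * Real.sqrt (t k) ≤ Real.sqrt (hH.eigenvalues i) := by
      intro i
      rw [heig i]
      exact sum_mul_sqrt_le _ _ (fun k => sq_nonneg _) ht (hrow i)
    calc ∑ k, Real.sqrt (t k)
        = ∑ k, (∑ i, (M i k)^2) * Real.sqrt (t k) := by
          simp only [hcol, one_mul]
      _ = ∑ k, ∑ i, (M i k)^2 * Real.sqrt (t k) := by
          simp only [Finset.sum_mul]
      _ = ∑ i, ∑ k, (M i k)^2 * Real.sqrt (t k) := by rw [Finset.sum_comm]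
      _ ≤ ∑ i, Real.sqrt (hH.eigenvalues i) := Finset.sum_le_sum fun i _ => h1 i

/-- rectangular diagonal embedding -/
def rdiag {d1 d2 : ℕ} (s : Fin d2 → ℝ) : Matrix (Fin d1) (Fin d2) ℝ :=
  Matrix.of fun (i : Fin d1) (j : Fin d2) => if (i : ℕ) = (j : ℕ) then s j else 0

lemma rdiag_transpose_mul {d1 d2 : ℕ} (hd : d2 ≤ d1) (s : Fin d2 → ℝ) :
    (rdiag (d1 := d1) s)ᵀ * rdiag (d1 := d1) s = Matrix.diagonal (fun j => (s j) ^ 2) := by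
  ext j k
  simp only [Matrix.mul_apply, Matrix.transpose_apply, rdiag, Matrix.of_apply,
    Matrix.diagonal_apply]
  have he : ∀ (j : Fin d2) (i : Fin d1), ((i : ℕ) = (j : ℕ)) ↔ i = Fin.castLE hd j := by
    intro j i
    constructor
    · intro h; exact Fin.ext (by simpa using h)
    · intro h; subst h; simp
  by_cases hjk : j = k
  · subst hjk
    rw [Finset.sum_eq_single (Fin.castLE hd j)]
    · simp [he, sq]
    · intro b _ hb
      simp only [he]
      rw [if_neg hb]
      ring
    · simp
  · rw [if_neg hjk]
    apply Finset.sum_eq_zero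
    intro i _
    by_cases h1 : (i : ℕ) = (j : ℕ)
    · have h2 : ¬ ((i : ℕ) = (k : ℕ)) := by
        intro h2
        exact hjk (Fin.ext (h1.symm.trans h2))
      rw [if_neg h2]
      ring
    · rw [if_neg h1]
      ring

lemma nuclear_svd {d1 d2 : ℕ} (hd : d2 ≤ d1)
    (U : Matrix (Fin d1) (Fin d1) ℝ) (V : Matrix (Fin d2) (Fin d2) ℝ)
    (hU₁ : Uᵀ * U = 1) (hV₁ : Vᵀ * V = 1) (hV₂ : V * Vᵀ = 1)
    (s : Fin d2 → ℝ) (hs : ∀ j, 0 ≤ s j) :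
    nuclearNorm (U * rdiag (d1 := d1) s * Vᵀ) = ∑ j, s j := by
  set A : Matrix (Fin d1) (Fin d2) ℝ := U * rdiag (d1 := d1) s * Vᵀ with hA
  have hAH : Aᴴ * A = V * Matrix.diagonal (fun j => (s j)^2) * Vᵀ := by
    rw [Matrix.conjTranspose_eq_transpose_of_trivial, hA]
    simp only [Matrix.transpose_mul, Matrix.transpose_transpose, Matrix.mul_assoc]
    rw [← Matrix.mul_assoc Uᵀ U, hU₁, Matrix.one_mul,
      ← Matrix.mul_assoc ((rdiag (d1 := d1) s)ᵀ), rdiag_transpose_mul hd]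
  have key := sum_sqrt_eigenvalues (Matrix.isHermitian_conjTranspose_mul_self A) V
    (fun j => (s j)^2) hV₁ hV₂ (fun j => sq_nonneg _) hAH
  rw [nuclearNorm]
  simp only [svals]
  rw [key]
  exact Finset.sum_congr rfl fun j _ => Real.sqrt_sq (hs j)

/-- Bessel-type inequality for d2 orthonormal columns of an orthogonal matrix. -/
lemma bessel_aux {d1 d2 : ℕ} (hd : d2 ≤ d1) (U : Matrix (Fin d1) (Fin d1) ℝ)
    (hU₂ : U * Uᵀ = 1) (x : Fin d1 → ℝ) :
    ∑ j : Fin d2, (∑ i, U i (Fin.castLE hd j) * x i) ^ 2 ≤ ∑ i, (x i) ^ 2 := by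
  set y : Fin d1 → ℝ := fun p => ∑ i, U i p * x i with hy
  have hfull : ∑ p, (y p) ^ 2 = ∑ i, (x i) ^ 2 := by
    have h1 : y = Uᵀ *ᵥ x := by
      funext p; simp [hy, Matrix.mulVec, dotProduct, Matrix.transpose_apply]
    have h2 : ∑ p, (y p)^2 = y ⬝ᵥ y := by simp [dotProduct, sq]
    have h3 : ∑ i, (x i)^2 = x ⬝ᵥ x := by simp [dotProduct, sq]
    rw [h2, h3, h1]
    calc (Uᵀ *ᵥ x) ⬝ᵥ (Uᵀ *ᵥ x) = ((Uᵀ *ᵥ x) ᵥ* Uᵀ) ⬝ᵥ x := by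
          rw [dotProduct_mulVec]
      _ = (U *ᵥ (Uᵀ *ᵥ x)) ⬝ᵥ x := by rw [Matrix.vecMul_transpose]
      _ = ((U * Uᵀ) *ᵥ x) ⬝ᵥ x := by rw [Matrix.mulVec_mulVec]
      _ = x ⬝ᵥ x := by rw [hU₂, Matrix.one_mulVec]
  have hinj : Function.Injective (Fin.castLE hd) := Fin.castLE_injective hd
  calc ∑ j : Fin d2, (y (Fin.castLE hd j)) ^ 2
      = ∑ p ∈ Finset.univ.image (Fin.castLE hd), (y p) ^ 2 := by
        rw [Finset.sum_image (fun a _ b _ h => hinj h)]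
    _ ≤ ∑ p, (y p) ^ 2 := Finset.sum_le_sum_of_subset_of_nonneg
        (Finset.subset_univ _) (fun p _ _ => sq_nonneg _)
    _ = ∑ i, (x i) ^ 2 := hfull

lemma nuclear_lb {d1 d2 : ℕ} (hd : d2 ≤ d1)
    (U : Matrix (Fin d1) (Fin d1) ℝ) (V : Matrix (Fin d2) (Fin d2) ℝ)
    (hU₂ : U * Uᵀ = 1) (hV₂ : V * Vᵀ = 1)
    (X : Matrix (Fin d1) (Fin d2) ℝ) :
    ∑ j, |(Uᵀ * X * V) (Fin.castLE hd j) j| ≤ nuclearNorm X := by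
  set hH := Matrix.isHermitian_conjTranspose_mul_self X with hhH
  set eig : Fin d2 → ℝ := hH.eigenvalues with heigdef
  set Wm : Matrix (Fin d2) (Fin d2) ℝ := (hH.eigenvectorUnitary : Matrix (Fin d2) (Fin d2) ℝ)
    with hWm
  have hW1 : Wmᵀ * Wm = 1 := by
    have := Matrix.mem_unitaryGroup_iff'.mp hH.eigenvectorUnitary.2
    rwa [Matrix.star_eq_conjTranspose, Matrix.conjTranspose_eq_transpose_of_trivial] at this
  have hW2 : Wm * Wmᵀ = 1 := mul_eq_one_comm.mp hW1
  have hspec : Wmᵀ * (Xᴴ * X) * Wm = Matrix.diagonal eig := by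
    have := hH.conjStarAlgAut_star_eigenvectorUnitary
    rw [Unitary.conjStarAlgAut_star_apply] at this
    rw [Matrix.star_eq_conjTranspose, Matrix.conjTranspose_eq_transpose_of_trivial] at this
    rw [this]
    congr 1
  set B : Matrix (Fin d1) (Fin d2) ℝ := X * Wm with hB
  have hXB : X = B * Wmᵀ := by
    rw [hB, Matrix.mul_assoc, hW2, Matrix.mul_one]
  have hBtB : Bᵀ * B = Matrix.diagonal eig := by
    rw [hB, Matrix.transpose_mul]
    have hXT : Xᵀ = Xᴴ := (Matrix.conjTranspose_eq_transpose_of_trivial X).symm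
    calc Wmᵀ * Xᵀ * (X * Wm) = Wmᵀ * (Xᴴ * X) * Wm := by
          rw [hXT]; simp only [Matrix.mul_assoc]
      _ = Matrix.diagonal eig := hspec
  have hBcol : ∀ k, ∑ a, (B a k) ^ 2 = eig k := by
    intro k
    have := congrFun (congrFun hBtB k) k
    simpa [Matrix.mul_apply, Matrix.diagonal_apply, sq] using this
  have heig_nn : ∀ k, 0 ≤ eig k := fun k => by
    rw [← hBcol k]; exact Finset.sum_nonneg fun a _ => sq_nonneg _
  have hBzero : ∀ k, eig k = 0 → ∀ a, B a k = 0 := by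
    intro k hk a
    have h0 : ∑ a, (B a k)^2 = 0 := by rw [hBcol k, hk]
    have := (Finset.sum_eq_zero_iff_of_nonneg (fun a _ => sq_nonneg (B a k))).1 h0 a (mem_univ a)
    exact pow_eq_zero_iff (n := 2) (by norm_num) |>.1 this
  set Cm : Matrix (Fin d2) (Fin d2) ℝ := Wmᵀ * V with hCm
  have hCrow : ∀ k, ∑ j, (Cm k j) ^ 2 = 1 := by
    intro k
    have hCC : Cm * Cmᵀ = 1 := by
      rw [hCm, Matrix.transpose_mul, Matrix.transpose_transpose]
      calc Wmᵀ * V * (Vᵀ * Wm) = Wmᵀ * (V * Vᵀ) * Wm := by simp only [Matrix.mul_assoc]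
        _ = 1 := by rw [hV₂, Matrix.mul_one, hW1]
    have := congrFun (congrFun hCC k) k
    simpa [Matrix.mul_apply, Matrix.one_apply, sq] using this
  set a : Fin d2 → Fin d2 → ℝ :=
    fun j k => (∑ i, U i (Fin.castLE hd j) * B i k) / Real.sqrt (eig k) with ha
  have hsa : ∀ j k, Real.sqrt (eig k) * a j k = ∑ i, U i (Fin.castLE hd j) * B i k := by
    intro j k
    by_cases hk : eig k = 0
    · have : ∀ i, B i k = 0 := hBzero k hk
      simp [ha, this, hk]
    · have hpos : Real.sqrt (eig k) ≠ 0 := by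
        rw [Real.sqrt_ne_zero' ]
        exact lt_of_le_of_ne (heig_nn k) (Ne.symm hk)
      rw [ha]
      field_simp
  have haB : ∀ k, ∑ j, (a j k) ^ 2 ≤ 1 := by
    intro k
    by_cases hk : eig k = 0
    · have : ∀ i, B i k = 0 := hBzero k hk
      simp [ha, this]
    · have hpos : 0 < eig k := lt_of_le_of_ne (heig_nn k) (Ne.symm hk)
      have hb := bessel_aux hd U hU₂ (fun i => B i k)
      rw [hBcol k] at hb
      have hsq : ∀ j, (a j k)^2 = (∑ i, U i (Fin.castLE hd j) * B i k)^2 / eig k := by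
        intro j
        rw [ha]
        rw [div_pow, Real.sq_sqrt (heig_nn k)]
      rw [Finset.sum_congr rfl fun j _ => hsq j, ← Finset.sum_div]
      rw [div_le_one hpos]
      exact hb
  -- decomposition
  have hUB : ∀ j k, (Uᵀ * B) (Fin.castLE hd j) k = Real.sqrt (eig k) * a j k := by
    intro j k
    rw [hsa]
    simp [Matrix.mul_apply, Matrix.transpose_apply]
  have hdecomp : ∀ j, (Uᵀ * X * V) (Fin.castLE hd j) j
      = ∑ k, Real.sqrt (eig k) * a j k * Cm k j := by
    intro j
    have hm : Uᵀ * X * V = (Uᵀ * B) * Cm := by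
      rw [hXB, hCm]; simp only [Matrix.mul_assoc]
    rw [hm, Matrix.mul_apply]
    exact Finset.sum_congr rfl fun k _ => by rw [hUB]
  have habs : ∀ k, ∑ j, |a j k| * |Cm k j| ≤ 1 := by
    intro k
    have hcs := Finset.sum_mul_sq_le_sq_mul_sq Finset.univ
      (fun j => |a j k|) (fun j => |Cm k j|)
    simp only [sq_abs] at hcs
    have h1 : (∑ j, |a j k| * |Cm k j|) ^ 2 ≤ 1 := by
      calc (∑ j, |a j k| * |Cm k j|) ^ 2 ≤ (∑ j, (a j k)^2) * (∑ j, (Cm k j)^2) := hcs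
        _ ≤ 1 := by rw [hCrow k, mul_one]; exact haB k
    nlinarith [Finset.sum_nonneg (fun j (_ : j ∈ Finset.univ) => mul_nonneg (abs_nonneg (a j k)) (abs_nonneg (Cm k j)))]
  calc ∑ j, |(Uᵀ * X * V) (Fin.castLE hd j) j|
      = ∑ j, |∑ k, Real.sqrt (eig k) * a j k * Cm k j| := by
        exact Finset.sum_congr rfl fun j _ => by rw [hdecomp]
    _ ≤ ∑ j, ∑ k, Real.sqrt (eig k) * (|a j k| * |Cm k j|) := by
        apply Finset.sum_le_sum
        intro j _
        calc |∑ k, Real.sqrt (eig k) * a j k * Cm k j|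
            ≤ ∑ k, |Real.sqrt (eig k) * a j k * Cm k j| := Finset.abs_sum_le_sum_abs _ _
          _ = ∑ k, Real.sqrt (eig k) * (|a j k| * |Cm k j|) := by
              apply Finset.sum_congr rfl
              intro k _
              rw [abs_mul, abs_mul, abs_of_nonneg (Real.sqrt_nonneg _), mul_assoc]
    _ = ∑ k, Real.sqrt (eig k) * ∑ j, |a j k| * |Cm k j| := by
        rw [Finset.sum_comm]
        exact Finset.sum_congr rfl fun k _ => by rw [Finset.mul_sum]
    _ ≤ ∑ k, Real.sqrt (eig k) * 1 := Finset.sum_le_sum fun k _ =>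
        mul_le_mul_of_nonneg_left (habs k) (Real.sqrt_nonneg _)
    _ = nuclearNorm X := by
        simp only [mul_one, nuclearNorm, svals]
        rfl

lemma scalar_prox {γ : ℝ} (hγ : 0 < γ) (t : ℝ) (ht : 0 ≤ t) (x : ℝ) :
    γ * max (t - γ) 0 + 1/2*(max (t - γ) 0 - t)^2 + 1/2*(x - max (t - γ) 0)^2
      ≤ 1/2*(x - t)^2 + γ * |x| := by
  rcases le_total t γ with h | h
  · rw [max_eq_right (by linarith)]
    rcases abs_cases x with ⟨h2, h3⟩ | ⟨h2, h3⟩ <;> nlinarith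
  · rw [max_eq_left (by linarith)]
    rcases abs_cases x with ⟨h2, h3⟩ | ⟨h2, h3⟩ <;> nlinarith

lemma F2_split {d1 d2 : ℕ} (hd : d2 ≤ d1) (M : Matrix (Fin d1) (Fin d2) ℝ) :
    F2 M = (∑ j, (M (Fin.castLE hd j) j) ^ 2)
      + ∑ j, ∑ i ∈ Finset.univ.erase (Fin.castLE hd j), (M i j) ^ 2 := by
  rw [F2, Finset.sum_comm, ← Finset.sum_add_distrib]
  apply Finset.sum_congr rfl
  intro j _
  exact (Finset.add_sum_erase Finset.univ (fun i => (M i j)^2) (Finset.mem_univ _)).symm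

lemma F2_sub_rdiag {d1 d2 : ℕ} (hd : d2 ≤ d1) (M : Matrix (Fin d1) (Fin d2) ℝ)
    (v : Fin d2 → ℝ) :
    F2 (M - rdiag (d1 := d1) v) = (∑ j, (M (Fin.castLE hd j) j - v j) ^ 2)
      + ∑ j, ∑ i ∈ Finset.univ.erase (Fin.castLE hd j), (M i j) ^ 2 := by
  rw [F2_split hd]
  congr 1
  · apply Finset.sum_congr rfl
    intro j _
    have : (M - rdiag (d1 := d1) v) (Fin.castLE hd j) j = M (Fin.castLE hd j) j - v j := by
      simp [rdiag, Matrix.sub_apply]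
    rw [this]
  · apply Finset.sum_congr rfl
    intro j _
    apply Finset.sum_congr rfl
    intro i hi
    have hne : i ≠ Fin.castLE hd j := (Finset.mem_erase.mp hi).1
    have hne' : ¬ ((i : ℕ) = (j : ℕ)) := by
      intro h
      exact hne (Fin.ext (by simpa using h))
    simp [rdiag, Matrix.sub_apply, hne']

lemma rdiag_sub {d1 d2 : ℕ} (v w : Fin d2 → ℝ) :
    rdiag (d1 := d1) v - rdiag (d1 := d1) w = rdiag (d1 := d1) (fun j => v j - w j) := by
  ext i j
  by_cases h : (i : ℕ) = (j : ℕ) <;> simp [rdiag, h]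

lemma F2_rdiag {d1 d2 : ℕ} (hd : d2 ≤ d1) (v : Fin d2 → ℝ) :
    F2 (rdiag (d1 := d1) v) = ∑ j, (v j) ^ 2 := by
  have h := F2_sub_rdiag hd (rdiag (d1 := d1) v) (fun _ => 0)
  simp only [sub_zero] at h
  have h2 : rdiag (d1 := d1) v - rdiag (d1 := d1) (fun _ : Fin d2 => (0:ℝ)) = rdiag (d1 := d1) v := by
    rw [rdiag_sub]
    congr 1
    funext j
    ring
  rw [h2] at h
  rw [h]
  have h3 : ∀ j : Fin d2, ∑ i ∈ Finset.univ.erase (Fin.castLE hd j),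
      (rdiag (d1 := d1) v i j)^2 = 0 := by
    intro j
    apply Finset.sum_eq_zero
    intro i hi
    have hne : i ≠ Fin.castLE hd j := (Finset.mem_erase.mp hi).1
    have hne' : ¬ ((i : ℕ) = (j : ℕ)) := fun h => hne (Fin.ext (by simpa using h))
    simp [rdiag, hne']
  simp only [h3, Finset.sum_const_zero, add_zero]
  apply Finset.sum_congr rfl
  intro j _
  simp [rdiag]

lemma conj_recover {d1 d2 : ℕ} (U : Matrix (Fin d1) (Fin d1) ℝ) (V : Matrix (Fin d2) (Fin d2) ℝ)
    (hU₂ : U * Uᵀ = 1) (hV₂ : V * Vᵀ = 1) (Y : Matrix (Fin d1) (Fin d2) ℝ) :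
    U * (Uᵀ * Y * V) * Vᵀ = Y := by
  calc U * (Uᵀ * Y * V) * Vᵀ = (U * Uᵀ) * Y * (V * Vᵀ) := by simp only [Matrix.mul_assoc]
    _ = Y := by rw [hU₂, hV₂, Matrix.one_mul, Matrix.mul_one]

end Aux

/-- Singular value soft-thresholding computes the proximal mapping of `γ‖·‖_*`:
if `G = U [Diag(σ); 0] Vᵀ` is an SVD (with `U`, `V` orthogonal and
`σ₁ ≥ … ≥ σ_{d2} ≥ 0`), then `U [Diag((σ−γ)₊); 0] Vᵀ` is the unique minimizer of
`X ↦ (1/2)‖X − G‖_F² + γ‖X‖_*`. -/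


theorem prox_nuclear_svd_soft_threshold {d1 d2 : ℕ} (hd : d2 ≤ d1) {γ : ℝ} (hγ : 0 < γ)
    (G : Matrix (Fin d1) (Fin d2) ℝ)
    (U : Matrix (Fin d1) (Fin d1) ℝ) (V : Matrix (Fin d2) (Fin d2) ℝ)
    (σ : Fin d2 → ℝ)
    (hU₁ : Uᵀ * U = 1) (hU₂ : U * Uᵀ = 1)
    (hV₁ : Vᵀ * V = 1) (hV₂ : V * Vᵀ = 1)
    (hσ : ∀ i, 0 ≤ σ i) (hσmono : ∀ i j : Fin d2, i ≤ j → σ j ≤ σ i)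
    (hG : G = U * (Matrix.of fun (i : Fin d1) (j : Fin d2) =>
      if (i : ℕ) = (j : ℕ) then σ j else 0) * Vᵀ) :
    let P : Matrix (Fin d1) (Fin d2) ℝ :=
      U * (Matrix.of fun (i : Fin d1) (j : Fin d2) =>
        if (i : ℕ) = (j : ℕ) then max (σ j - γ) 0 else 0) * Vᵀ
    IsProxNuc γ G P ∧
      ∀ X : Matrix (Fin d1) (Fin d2) ℝ,
        (∀ Y : Matrix (Fin d1) (Fin d2) ℝ,
          (1 / 2) * (frobNorm (X - G)) ^ 2 + γ * nuclearNorm X ≤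
            (1 / 2) * (frobNorm (Y - G)) ^ 2 + γ * nuclearNorm Y) → X = P := by
  intro P
  set e : Fin d2 → Fin d1 := Fin.castLE hd with he
  set s : Fin d2 → ℝ := fun j => max (σ j - γ) 0 with hs
  have hs_nn : ∀ j, 0 ≤ s j := fun j => le_max_right _ _
  have hP : P = U * rdiag (d1 := d1) s * Vᵀ := rfl
  have hG' : G = U * rdiag (d1 := d1) σ * Vᵀ := hG
  have hVt : Vᵀ * Vᵀᵀ = 1 := by rw [Matrix.transpose_transpose]; exact hV₁
  have hNP : nuclearNorm P = ∑ j, s j := by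
    rw [hP]; exact nuclear_svd hd U V hU₁ hV₁ hV₂ s hs_nn
  have hPG : (frobNorm (P - G)) ^ 2 = ∑ j, (s j - σ j) ^ 2 := by
    rw [frobNorm_sq]
    have h1 : P - G = U * rdiag (d1 := d1) (fun j => s j - σ j) * Vᵀ := by
      rw [hP, hG', ← rdiag_sub, Matrix.mul_sub, Matrix.sub_mul]
    rw [h1, F2_conj U Vᵀ hU₁ hVt, F2_rdiag hd]
  have key : ∀ Y : Matrix (Fin d1) (Fin d2) ℝ,
      (1 / 2) * (frobNorm (P - G)) ^ 2 + γ * nuclearNorm P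
        + (1 / 2) * F2 (Uᵀ * Y * V - rdiag (d1 := d1) s) ≤
      (1 / 2) * (frobNorm (Y - G)) ^ 2 + γ * nuclearNorm Y := by
    intro Y
    set X' : Matrix (Fin d1) (Fin d2) ℝ := Uᵀ * Y * V with hX'
    set x : Fin d2 → ℝ := fun j => X' (e j) j with hx
    set R : ℝ := ∑ j, ∑ i ∈ Finset.univ.erase (e j), (X' i j) ^ 2 with hRdef
    have hR : 0 ≤ R :=
      Finset.sum_nonneg fun j _ => Finset.sum_nonneg fun i _ => sq_nonneg _
    have hYrec : Y = U * X' * Vᵀ := (conj_recover U V hU₂ hV₂ Y).symm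
    have hYG : (frobNorm (Y - G)) ^ 2 = (∑ j, (x j - σ j) ^ 2) + R := by
      rw [frobNorm_sq]
      have h1 : Y - G = U * (X' - rdiag (d1 := d1) σ) * Vᵀ := by
        rw [Matrix.mul_sub, Matrix.sub_mul, ← hYrec, ← hG']
      rw [h1, F2_conj U Vᵀ hU₁ hVt, F2_sub_rdiag hd]
    have hF2s : F2 (X' - rdiag (d1 := d1) s) = (∑ j, (x j - s j) ^ 2) + R :=
      F2_sub_rdiag hd X' s
    have hNY : ∑ j, |x j| ≤ nuclearNorm Y := nuclear_lb hd U V hU₂ hV₂ Y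
    have hNY' : γ * (∑ j, |x j|) ≤ γ * nuclearNorm Y :=
      mul_le_mul_of_nonneg_left hNY hγ.le
    have main : ∑ j, (γ * s j + 1/2*(s j - σ j)^2 + 1/2*(x j - s j)^2)
        ≤ ∑ j, (1/2*(x j - σ j)^2 + γ * |x j|) :=
      Finset.sum_le_sum fun j _ => scalar_prox hγ (σ j) (hσ j) (x j)
    have expand1 : ∑ j, (γ * s j + 1/2*(s j - σ j)^2 + 1/2*(x j - s j)^2)
        = γ * (∑ j, s j) + (1/2) * (∑ j, (s j - σ j)^2) + (1/2) * (∑ j, (x j - s j)^2) := by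
      rw [Finset.sum_add_distrib, Finset.sum_add_distrib, ← Finset.mul_sum,
        ← Finset.mul_sum, ← Finset.mul_sum]
    have expand2 : ∑ j, (1/2*(x j - σ j)^2 + γ * |x j|)
        = (1/2) * (∑ j, (x j - σ j)^2) + γ * (∑ j, |x j|) := by
      rw [Finset.sum_add_distrib, ← Finset.mul_sum, ← Finset.mul_sum]
    rw [expand1, expand2] at main
    rw [hYG, hPG, hNP, hF2s]
    linarith
  constructor
  · intro Y
    have h := key Y
    have h2 := F2_nonneg (Uᵀ * Y * V - rdiag (d1 := d1) s)
    linarith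
  · intro X hX
    have h1 := hX P
    have h2 := key X
    have h3 : F2 (Uᵀ * X * V - rdiag (d1 := d1) s) ≤ 0 := by linarith
    have h4 : Uᵀ * X * V - rdiag (d1 := d1) s = 0 := F2_eq_zero _ h3
    have h5 : Uᵀ * X * V = rdiag (d1 := d1) s := sub_eq_zero.mp h4
    calc X = U * (Uᵀ * X * V) * Vᵀ := (conj_recover U V hU₂ hV₂ X).symm
      _ = U * rdiag (d1 := d1) s * Vᵀ := by rw [h5]
      _ = P := rfl
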